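/- Given 1-Lipschitz functions t, w: ℤ_2 → ℤ_2, the function t + 4w is ergodic on ℤ_2 (with respect to the Haar measure μ_2) if and only if t is ergodic on ℤ_2. -/

import Mathlib

open MeasureTheory ProbabilityTheory

noncomputable instance : MeasurableSpace ℤ_[2] := borel _
instance : BorelSpace ℤ_[2] := ⟨rfl⟩

set_option linter.unusedSectionVars false

namespace FinDyn
open Function
variable {α : Type*} [Fintype α] {F : α → α} {z : α}

lemma iter_mul_period {p : ℕ} (hp : F^[p] z = z) (q : ℕ) : F^[p * q] z = z := by
  induction q with
  | zero => simp
  | succ q ih => rw [Nat.mul_succ, Function.iterate_add_apply, hp, ih]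

lemma iter_mod {p : ℕ} (hp : F^[p] z = z) (k : ℕ) : F^[k] z = F^[k % p] z := by
  conv_lhs => rw [← Nat.mod_add_div k p]
  rw [Function.iterate_add_apply, iter_mul_period hp]

lemma period_of_eq (hb : Function.Injective F) {i j : ℕ} (h : i < j)
    (heq : F^[i] z = F^[j] z) : F^[j - i] z = z := by
  have : F^[i] (F^[j - i] z) = F^[i] z := by
    rw [← Function.iterate_add_apply, show i + (j - i) = j by omega, heq]
  exact (hb.iterate i) this

lemma exists_period (hb : Function.Injective F) :
    ∃ p, 0 < p ∧ p ≤ Fintype.card α ∧ F^[p] z = z := by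
  have hcard : Fintype.card α < Fintype.card (Fin (Fintype.card α + 1)) := by simp
  obtain ⟨i, j, hij, heq⟩ := Fintype.exists_ne_map_eq_of_card_lt
    (fun k : Fin (Fintype.card α + 1) => F^[(k : ℕ)] z) hcard
  have hij' : (i:ℕ) ≠ (j:ℕ) := fun h => hij (Fin.ext h)
  rcases Ne.lt_or_gt hij' with h | h
  · exact ⟨(j:ℕ) - i, by omega, by have := j.isLt; omega, period_of_eq hb h heq⟩
  · exact ⟨(i:ℕ) - j, by omega, by have := i.isLt; omega, period_of_eq hb h heq.symm⟩

lemma card_le_period (hcov : ∀ a, ∃ k, F^[k] z = a) {p : ℕ} (hp0 : 0 < p)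
    (hp : F^[p] z = z) : Fintype.card α ≤ p := by
  have hsurj : Function.Surjective (fun k : Fin p => F^[(k:ℕ)] z) := by
    intro a
    obtain ⟨k, hk⟩ := hcov a
    exact ⟨⟨k % p, Nat.mod_lt _ hp0⟩, by simpa [← iter_mod hp k]⟩
  simpa using Fintype.card_le_of_surjective _ hsurj

lemma period_card (hb : Function.Injective F) (hcov : ∀ a, ∃ k, F^[k] z = a) :
    F^[Fintype.card α] z = z := by
  obtain ⟨p, hp0, hple, hp⟩ := exists_period (z := z) hb
  have := card_le_period hcov hp0 hp
  rwa [show Fintype.card α = p by omega]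

lemma cov_lt (hb : Function.Injective F) (hcov : ∀ a, ∃ k, F^[k] z = a) (a : α) :
    ∃ k < Fintype.card α, F^[k] z = a := by
  have hpos : 0 < Fintype.card α := Fintype.card_pos_iff.mpr ⟨z⟩
  obtain ⟨k, hk⟩ := hcov a
  exact ⟨k % Fintype.card α, Nat.mod_lt _ hpos,
    by rw [← iter_mod (period_card hb hcov) k]; exact hk⟩

lemma inj_lt (hb : Function.Injective F) (hcov : ∀ a, ∃ k, F^[k] z = a) {j k : ℕ}
    (hj : j < Fintype.card α) (hk : k < Fintype.card α) (heq : F^[j] z = F^[k] z) : j = k := by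
  by_contra hne
  rcases Ne.lt_or_gt hne with h | h
  · have := card_le_period hcov (p := k - j) (by omega) (period_of_eq hb h heq)
    omega
  · have := card_le_period hcov (p := j - k) (by omega) (period_of_eq hb h heq.symm)
    omega

lemma iter_card_id (hb : Function.Injective F) (hcov : ∀ a, ∃ k, F^[k] z = a) (a : α) :
    F^[Fintype.card α] a = a := by
  obtain ⟨k, hk⟩ := hcov a
  rw [← hk, ← Function.iterate_add_apply, add_comm, Function.iterate_add_apply,
    period_card hb hcov]

lemma pair (hb : Function.Injective F) (hcov : ∀ a, ∃ k, F^[k] z = a) (a b : α) :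
    ∃ k, F^[k] a = b := by
  obtain ⟨i, hilt, hi⟩ := cov_lt hb hcov a
  obtain ⟨j, hj⟩ := hcov b
  refine ⟨Fintype.card α + j - i, ?_⟩
  rw [← hi, ← Function.iterate_add_apply,
    show Fintype.card α + j - i + i = j + Fintype.card α by omega,
    Function.iterate_add_apply, period_card hb hcov, hj]

end FinDyn

namespace Erg4
open PadicInt Function
open scoped ENNReal

def Lip (f : ℤ_[2] → ℤ_[2]) : Prop := ∀ x y : ℤ_[2], ‖f x - f y‖ ≤ ‖x - y‖

lemma toZ_eq_zero_iff (n : ℕ) (x : ℤ_[2]) :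
    toZModPow n x = 0 ↔ ‖x‖ ≤ (2:ℝ) ^ (-(n:ℤ)) := by
  have h := PadicInt.norm_le_pow_iff_mem_span_pow x n (p := 2)
  rw [← PadicInt.ker_toZModPow, RingHom.mem_ker] at h
  rw [h.symm]; norm_num

lemma toZ_eq_iff (n : ℕ) (x y : ℤ_[2]) :
    toZModPow n x = toZModPow n y ↔ ‖x - y‖ ≤ (2:ℝ) ^ (-(n:ℤ)) := by
  rw [← toZ_eq_zero_iff, map_sub, sub_eq_zero]

lemma toZ_val (n : ℕ) (a : ZMod (2^n)) : toZModPow n ((a.val : ℤ_[2])) = a := by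
  rw [map_natCast, ZMod.natCast_zmod_val]

noncomputable def indMap (f : ℤ_[2] → ℤ_[2]) (n : ℕ) (a : ZMod (2^n)) : ZMod (2^n) :=
  toZModPow n (f ((a.val : ℤ_[2])))

lemma lip_congr {f} (hf : Lip f) {m : ℕ} {x y : ℤ_[2]}
    (h : toZModPow m x = toZModPow m y) : toZModPow m (f x) = toZModPow m (f y) := by
  rw [toZ_eq_iff] at h ⊢
  exact le_trans (hf x y) h

lemma indMap_spec {f} (hf : Lip f) (n : ℕ) (x : ℤ_[2]) :
    toZModPow n (f x) = indMap f n (toZModPow n x) :=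
  lip_congr hf ((toZ_val n _).symm)

lemma indMap_iterate {f} (hf : Lip f) (n k : ℕ) (x : ℤ_[2]) :
    toZModPow n (f^[k] x) = (indMap f n)^[k] (toZModPow n x) := by
  induction k with
  | zero => simp
  | succ k ih =>
      rw [Function.iterate_succ_apply', Function.iterate_succ_apply', indMap_spec hf, ih]

def Trans2 (f : ℤ_[2] → ℤ_[2]) (n : ℕ) : Prop :=
  Function.Bijective (indMap f n) ∧ ∀ a : ZMod (2^n), ∃ k, (indMap f n)^[k] 0 = a

lemma trans_zero (f : ℤ_[2] → ℤ_[2]) : Trans2 f 0 := by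
  have h : Subsingleton (ZMod (2^0)) := by rw [pow_zero]; infer_instance
  exact ⟨⟨fun a b _ => Subsingleton.elim a b, fun a => ⟨a, Subsingleton.elim _ _⟩⟩,
    fun a => ⟨0, Subsingleton.elim _ _⟩⟩

lemma card_zmod (n : ℕ) : Fintype.card (ZMod (2^n)) = 2^n := ZMod.card _

namespace Trans2
variable {f : ℤ_[2] → ℤ_[2]} {n : ℕ}

lemma inj_lt (h : Trans2 f n) {j k : ℕ} (hj : j < 2^n) (hk : k < 2^n)
    (he : (indMap f n)^[j] 0 = (indMap f n)^[k] 0) : j = k := by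
  refine FinDyn.inj_lt h.1.injective h.2 ?_ ?_ he <;> rw [card_zmod] <;> assumption

lemma iter_id (h : Trans2 f n) (a : ZMod (2^n)) : (indMap f n)^[2^n] a = a := by
  have := FinDyn.iter_card_id h.1.injective h.2 a
  rwa [card_zmod] at this

lemma pair (h : Trans2 f n) (a b : ZMod (2^n)) : ∃ k, (indMap f n)^[k] a = b :=
  FinDyn.pair h.1.injective h.2 a b

lemma cov_lt (h : Trans2 f n) (a : ZMod (2^n)) : ∃ k < 2^n, (indMap f n)^[k] 0 = a := by
  have := FinDyn.cov_lt h.1.injective h.2 a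
  rwa [card_zmod] at this

end Trans2

lemma toZ_two_pow (n m : ℕ) :
    toZModPow m ((2:ℤ_[2])^n) = ((2^n : ℕ) : ZMod (2^m)) := by
  push_cast
  rw [map_pow, map_ofNat]

lemma two_pow_ne_zero (n : ℕ) : ((2^n : ℕ) : ZMod (2^(n+1))) ≠ 0 := by
  intro h0
  rw [ZMod.natCast_eq_zero_iff] at h0
  have h1 : (2:ℕ)^(n+1) ≤ 2^n := Nat.le_of_dvd (Nat.two_pow_pos n) h0
  have h2 : (2:ℕ)^n < 2^(n+1) := Nat.pow_lt_pow_right one_lt_two (Nat.lt_succ_self n)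
  omega

lemma two_mul_eq_zero {n : ℕ} {z : ZMod (2^(n+1))} (h : 2 * z = 0) :
    z = 0 ∨ z = ((2^n : ℕ) : ZMod (2^(n+1))) := by
  have hz : ((z.val : ℕ) : ZMod (2^(n+1))) = z := ZMod.natCast_zmod_val z
  have h2 : ((2 * z.val : ℕ) : ZMod (2^(n+1))) = 0 := by push_cast; rw [hz]; exact h
  rw [ZMod.natCast_eq_zero_iff] at h2
  obtain ⟨c, hc⟩ := h2
  have hvlt : z.val < 2^(n+1) := ZMod.val_lt z
  have hpow : (2:ℕ)^(n+1) = 2 * 2^n := by ring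
  have hpos : 0 < (2:ℕ)^n := Nat.two_pow_pos n
  have hval : z.val = 2^n * c := by
    have : 2 * z.val = 2 * (2^n * c) := by rw [hc, hpow]; ring
    omega
  have hclt : c < 2 := by nlinarith
  interval_cases c
  · left; rw [← hz]; simp [hval]
  · right; rw [← hz, hval]; norm_num


noncomputable def pr (n : ℕ) : ZMod (2^(n+1)) →+* ZMod (2^n) :=
  ZMod.castHom (pow_dvd_pow 2 (Nat.le_succ n)) (ZMod (2^n))

lemma pr_toZ (n : ℕ) (x : ℤ_[2]) : pr n (toZModPow (n+1) x) = toZModPow n x :=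
  RingHom.congr_fun (PadicInt.zmod_cast_comp_toZModPow (p := 2) n (n+1) (Nat.le_succ n)) x

lemma pr_indMap {f} (hf : Lip f) (n : ℕ) (a : ZMod (2^(n+1))) :
    pr n (indMap f (n+1) a) = indMap f n (pr n a) := by
  have h1 : toZModPow (n+1) ((a.val : ℤ_[2])) = a := toZ_val _ a
  calc pr n (indMap f (n+1) a)
      = toZModPow n (f ((a.val : ℤ_[2]))) := pr_toZ n _
    _ = indMap f n (toZModPow n ((a.val : ℤ_[2]))) := indMap_spec hf n _
    _ = indMap f n (pr n a) := by rw [← pr_toZ n, h1]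

lemma pr_indMap_iterate {f} (hf : Lip f) (n k : ℕ) (a : ZMod (2^(n+1))) :
    pr n ((indMap f (n+1))^[k] a) = (indMap f n)^[k] (pr n a) := by
  induction k with
  | zero => simp
  | succ k ih =>
      rw [Function.iterate_succ_apply', Function.iterate_succ_apply', pr_indMap hf, ih]

lemma pr_eq_zero_iff {n : ℕ} (u : ZMod (2^(n+1))) :
    pr n u = 0 ↔ u = 0 ∨ u = ((2^n : ℕ) : ZMod (2^(n+1))) := by
  constructor
  · intro h0
    have hu : ((u.val : ℕ) : ZMod (2^(n+1))) = u := ZMod.natCast_zmod_val u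
    have h1 : ((u.val : ℕ) : ZMod (2^n)) = 0 := by
      rw [← map_natCast (pr n), hu, h0]
    rw [ZMod.natCast_eq_zero_iff] at h1
    obtain ⟨c, hc⟩ := h1
    have hvlt : u.val < 2^(n+1) := ZMod.val_lt u
    have hpow : (2:ℕ)^(n+1) = 2 * 2^n := by ring
    have hpos : 0 < (2:ℕ)^n := Nat.two_pow_pos n
    have hclt : c < 2 := by nlinarith
    interval_cases c
    · left; rw [← hu]; simp [hc]
    · right; rw [← hu, hc]; norm_num
  · rintro (rfl | rfl)
    · simp
    · rw [map_natCast, ZMod.natCast_self]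

lemma trans_succ_iff {f : ℤ_[2] → ℤ_[2]} {n : ℕ} (hf : Lip f) (hT : Trans2 f n)
    (hbij : Function.Bijective (indMap f (n+1))) :
    Trans2 f (n+1) ↔ (indMap f (n+1))^[2^n] 0 ≠ 0 := by
  have hlt : (2:ℕ)^n < 2^(n+1) := Nat.pow_lt_pow_right one_lt_two (Nat.lt_succ_self n)
  constructor
  · intro h' h0
    have := h'.inj_lt (j := 2^n) (k := 0) hlt (Nat.two_pow_pos (n+1)) (by simpa using h0)
    exact absurd this (Nat.two_pow_pos n).ne'
  · intro hne
    set F' := indMap f (n+1) with hF'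
    have hinj := hbij.injective
    have hψpr : ∀ a, pr n (F'^[2^n] a) = pr n a := fun a => by
      rw [hF', pr_indMap_iterate hf, hT.iter_id]
    have hψ0 : F'^[2^n] 0 = ((2^n:ℕ) : ZMod (2^(n+1))) := by
      have h1 := hψpr 0
      rw [map_zero] at h1
      rcases (pr_eq_zero_iff _).mp h1 with h | h
      · exact absurd h hne
      · exact h
    refine ⟨hbij, fun a => ?_⟩
    obtain ⟨k, hk⟩ := hT.2 (pr n a)
    set c := F'^[k] 0 with hc
    have hprc : pr n c = pr n a := by
      rw [hc, hF', pr_indMap_iterate hf, map_zero, hk]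
    have hcomm : F'^[2^n] c = F'^[k] (F'^[2^n] 0) := by
      rw [hc, ← Function.iterate_add_apply, ← Function.iterate_add_apply, Nat.add_comm (2^n) k]
    have hψc : F'^[2^n] c = c + ((2^n:ℕ) : ZMod (2^(n+1))) := by
      have h2 : pr n (F'^[2^n] c - c) = 0 := by rw [map_sub, hψpr, sub_self]
      rcases (pr_eq_zero_iff _).mp h2 with h3 | h3
      · exfalso
        rw [sub_eq_zero, hcomm, hψ0, hc] at h3
        exact two_pow_ne_zero n ((hinj.iterate k) h3)
      · rw [eq_add_of_sub_eq h3]; exact add_comm _ _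
    have hpra : pr n (a - c) = 0 := by rw [map_sub, hprc, sub_self]
    rcases (pr_eq_zero_iff _).mp hpra with h4 | h4
    · rw [sub_eq_zero] at h4
      exact ⟨k, by rw [← hc, ← h4]⟩
    · refine ⟨2^n + k, ?_⟩
      have h5 : F'^[2^n + k] 0 = F'^[2^n] c := by rw [Function.iterate_add_apply, ← hc]
      have h6 : a = c + ((2^n:ℕ) : ZMod (2^(n+1))) := by
        rw [eq_add_of_sub_eq h4]; exact add_comm _ _
      rw [h5, hψc, ← h6]

lemma norm_two_pow (n : ℕ) : ‖(2:ℤ_[2])^n‖ = (2:ℝ)^(-(n:ℤ)) := by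
  have := PadicInt.norm_p_pow (p := 2) n
  rw [Nat.cast_ofNat] at this
  rw [this]
  norm_num

lemma topbit {f : ℤ_[2] → ℤ_[2]} {n : ℕ} (hf : Lip f)
    (hinj : Function.Injective (indMap f (n+1))) (x : ℤ_[2]) :
    toZModPow (n+1) (f (x + 2^n)) = toZModPow (n+1) (f x) + ((2^n:ℕ) : ZMod (2^(n+1))) := by
  have hd : ‖f (x + 2^n) - f x‖ ≤ (2:ℝ)^(-(n:ℤ)) := by
    refine le_trans (hf _ _) ?_
    rw [show x + 2^n - x = (2:ℤ_[2])^n by ring, norm_two_pow]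
  set z := toZModPow (n+1) (f (x + 2^n) - f x) with hzdef
  have h2z : 2 * z = 0 := by
    have h1 : toZModPow (n+1) (2 * (f (x + 2^n) - f x)) = 0 := by
      rw [toZ_eq_zero_iff, norm_mul]
      have hn2 : ‖(2:ℤ_[2])‖ = (2:ℝ)⁻¹ := by
        have := PadicInt.norm_p (p := 2); rwa [Nat.cast_ofNat] at this
      rw [hn2]
      calc (2:ℝ)⁻¹ * ‖f (x + 2^n) - f x‖ ≤ 2⁻¹ * 2^(-(n:ℤ)) := by
            exact mul_le_mul_of_nonneg_left hd (by norm_num)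
        _ = (2:ℝ)^(-((n+1:ℕ):ℤ)) := by
            rw [show (-((n+1:ℕ):ℤ)) = -1 + (-(n:ℤ)) by push_cast; ring, zpow_add₀ (by norm_num : (2:ℝ) ≠ 0)]
            norm_num
    rw [map_mul] at h1
    rw [hzdef]
    calc 2 * toZModPow (n+1) (f (x + 2^n) - f x)
        = toZModPow (n+1) 2 * toZModPow (n+1) (f (x + 2^n) - f x) := by
          rw [map_ofNat]
      _ = 0 := h1
  rcases two_mul_eq_zero h2z with h0 | h1
  · exfalso
    rw [hzdef, map_sub, sub_eq_zero] at h0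
    have h2 : indMap f (n+1) (toZModPow (n+1) (x + 2^n)) = indMap f (n+1) (toZModPow (n+1) x) := by
      rw [← indMap_spec hf, ← indMap_spec hf, h0]
    have h3 := hinj h2
    rw [map_add, toZ_two_pow] at h3
    exact two_pow_ne_zero n (add_eq_left.mp h3)
  · rw [hzdef, map_sub] at h1
    rw [eq_add_of_sub_eq h1]; exact add_comm _ _


lemma norm_two : ‖(2:ℤ_[2])‖ = (2:ℝ)⁻¹ := by
  have := PadicInt.norm_p (p := 2); rwa [Nat.cast_ofNat] at this

lemma toZ_two_mul_eq_zero {n : ℕ} {d : ℤ_[2]} (hd : ‖d‖ ≤ (2:ℝ)^(-(n:ℤ))) :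
    2 * toZModPow (n+1) d = 0 := by
  have h1 : toZModPow (n+1) (2 * d) = 0 := by
    rw [toZ_eq_zero_iff, norm_mul, norm_two]
    calc (2:ℝ)⁻¹ * ‖d‖ ≤ 2⁻¹ * 2^(-(n:ℤ)) := mul_le_mul_of_nonneg_left hd (by norm_num)
      _ = (2:ℝ)^(-((n+1:ℕ):ℤ)) := by
          rw [show (-((n+1:ℕ):ℤ)) = -1 + (-(n:ℤ)) by push_cast; ring,
            zpow_add₀ (by norm_num : (2:ℝ) ≠ 0)]
          norm_num
  calc 2 * toZModPow (n+1) d = toZModPow (n+1) 2 * toZModPow (n+1) d := by rw [map_ofNat]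
    _ = toZModPow (n+1) (2 * d) := (map_mul _ _ _).symm
    _ = 0 := h1

lemma sub_cong {f : ℤ_[2] → ℤ_[2]} {n : ℕ} (hf : Lip f)
    (hinj : Function.Injective (indMap f (n+1))) {x r : ℤ_[2]}
    (hxr : toZModPow n x = toZModPow n r) :
    toZModPow (n+1) (f x - x) = toZModPow (n+1) (f r - r) := by
  have hd : ‖x - r‖ ≤ (2:ℝ)^(-(n:ℤ)) := (toZ_eq_iff n x r).mp hxr
  have h2z : 2 * toZModPow (n+1) (x - r) = 0 := toZ_two_mul_eq_zero hd
  rcases two_mul_eq_zero h2z with h0 | h1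
  · rw [map_sub, sub_eq_zero] at h0
    rw [map_sub, map_sub, lip_congr hf h0, h0]
  · rw [map_sub] at h1
    have he : toZModPow (n+1) x = toZModPow (n+1) (r + 2^n) := by
      rw [map_add, toZ_two_pow, eq_add_of_sub_eq h1]
      exact add_comm _ _
    rw [map_sub, map_sub, lip_congr hf he, he, topbit hf hinj, map_add, toZ_two_pow]
    ring

lemma orbit_sum {f : ℤ_[2] → ℤ_[2]} {n : ℕ} (hf : Lip f) (hT : Trans2 f n)
    (hinj : Function.Injective (indMap f (n+1))) :
    toZModPow (n+1) (f^[2^n] 0) =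
      ∑ l ∈ Finset.range (2^n), toZModPow (n+1) (f ((l:ℕ) : ℤ_[2]) - ((l:ℕ) : ℤ_[2])) := by
  classical
  have htel : f^[2^n] (0:ℤ_[2]) = ∑ j ∈ Finset.range (2^n), (f (f^[j] 0) - f^[j] 0) := by
    have h := Finset.sum_range_sub (fun j => f^[j] (0:ℤ_[2])) (2^n)
    simp only [Function.iterate_succ_apply'] at h
    rw [h]
    simp
  have hval : ∀ j, toZModPow n (f^[j] (0:ℤ_[2])) = (indMap f n)^[j] 0 := by
    intro j; rw [indMap_iterate hf, map_zero]
  set e : ℕ → ℕ := fun j => (toZModPow n (f^[j] (0:ℤ_[2]))).val with he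
  have hinj_e : ∀ j ∈ Finset.range (2^n), ∀ k ∈ Finset.range (2^n), e j = e k → j = k := by
    intro j hj k hk hjk
    have h1 : toZModPow n (f^[j] (0:ℤ_[2])) = toZModPow n (f^[k] (0:ℤ_[2])) :=
      ZMod.val_injective _ hjk
    rw [hval, hval] at h1
    exact hT.inj_lt (Finset.mem_range.mp hj) (Finset.mem_range.mp hk) h1
  have himg : (Finset.range (2^n)).image e = Finset.range (2^n) := by
    apply Finset.eq_of_subset_of_card_le
    · intro l hl
      obtain ⟨j, _, rfl⟩ := Finset.mem_image.mp hl
      exact Finset.mem_range.mpr (ZMod.val_lt _)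
    · rw [Finset.card_image_of_injOn (fun j hj k hk hjk => hinj_e j hj k hk hjk)]
  have hstep : ∀ j ∈ Finset.range (2^n),
      toZModPow (n+1) (f (f^[j] 0) - f^[j] 0)
        = toZModPow (n+1) (f ((e j : ℕ) : ℤ_[2]) - ((e j : ℕ) : ℤ_[2])) := by
    intro j _
    exact sub_cong hf hinj ((toZ_val n _).symm)
  calc toZModPow (n+1) (f^[2^n] 0)
      = ∑ j ∈ Finset.range (2^n), toZModPow (n+1) (f (f^[j] 0) - f^[j] 0) := by
        rw [htel, map_sum]
    _ = ∑ j ∈ Finset.range (2^n), toZModPow (n+1) (f ((e j : ℕ) : ℤ_[2]) - ((e j : ℕ) : ℤ_[2])) :=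
        Finset.sum_congr rfl hstep
    _ = ∑ l ∈ (Finset.range (2^n)).image e,
          toZModPow (n+1) (f ((l : ℕ) : ℤ_[2]) - ((l : ℕ) : ℤ_[2])) :=
        (Finset.sum_image (f := fun l : ℕ => toZModPow (n+1) (f ((l:ℕ):ℤ_[2]) - ((l:ℕ):ℤ_[2]))) hinj_e).symm
    _ = ∑ l ∈ Finset.range (2^n), toZModPow (n+1) (f ((l:ℕ) : ℤ_[2]) - ((l:ℕ) : ℤ_[2])) := by
        rw [himg]

lemma norm_sum_le_of (s : Finset ℕ) (g : ℕ → ℤ_[2]) {C : ℝ} (hC : 0 ≤ C)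
    (h : ∀ i ∈ s, ‖g i‖ ≤ C) : ‖∑ i ∈ s, g i‖ ≤ C := by
  classical
  induction s using Finset.induction_on with
  | empty => simpa using hC
  | @insert a s hni ih =>
      rw [Finset.sum_insert hni]
      exact le_trans (PadicInt.nonarchimedean _ _)
        (max_le (h _ (Finset.mem_insert_self _ _))
          (ih fun i hi => h i (Finset.mem_insert_of_mem hi)))

lemma lip_sum_bound {w : ℤ_[2] → ℤ_[2]} (hw : Lip w) (m : ℕ) :
    ‖∑ l ∈ Finset.range (2^m), w ((l:ℕ):ℤ_[2])‖ ≤ (2:ℝ)^(1-(m:ℤ)) := by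
  induction m with
  | zero =>
      simp only [pow_zero, Finset.range_one, Finset.sum_singleton]
      calc ‖w ((0:ℕ):ℤ_[2])‖ ≤ 1 := PadicInt.norm_le_one _
        _ ≤ (2:ℝ)^(1-((0:ℕ):ℤ)) := by norm_num
  | succ m ih =>
      have h2 : (2:ℝ) ≠ 0 := by norm_num
      have e1 : (2:ℝ)^(1-((m+1:ℕ):ℤ)) = (2:ℝ)^(-(m:ℤ)) := by
        congr 1; push_cast; ring
      rw [e1, show (2:ℕ)^(m+1) = 2^m + 2^m by ring, Finset.sum_range_add]
      have hrw : ∀ l ∈ Finset.range (2^m), w (((2^m + l : ℕ)):ℤ_[2])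
          = (w (((2^m + l : ℕ)):ℤ_[2]) - w ((l:ℕ):ℤ_[2])) + w ((l:ℕ):ℤ_[2]) := by
        intro l _; ring
      rw [Finset.sum_congr rfl hrw, Finset.sum_add_distrib]
      set S := ∑ l ∈ Finset.range (2^m), w ((l:ℕ):ℤ_[2]) with hS
      set D := ∑ l ∈ Finset.range (2^m),
        (w (((2^m + l : ℕ)):ℤ_[2]) - w ((l:ℕ):ℤ_[2])) with hD
      have hcomb : S + (D + S) = 2*S + D := by ring
      rw [hcomb]
      have hA : ‖2*S‖ ≤ (2:ℝ)^(-(m:ℤ)) := by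
        rw [norm_mul, norm_two]
        calc (2:ℝ)⁻¹ * ‖S‖ ≤ 2⁻¹ * (2:ℝ)^(1-(m:ℤ)) := mul_le_mul_of_nonneg_left ih (by norm_num)
          _ = (2:ℝ)^(-(m:ℤ)) := by
              rw [show (-(m:ℤ)) = -1 + (1-(m:ℤ)) by ring, zpow_add₀ h2]
              norm_num
      have hB : ‖D‖ ≤ (2:ℝ)^(-(m:ℤ)) := by
        apply norm_sum_le_of _ _ (by positivity)
        intro l _
        calc ‖w (((2^m + l : ℕ)):ℤ_[2]) - w ((l:ℕ):ℤ_[2])‖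
            ≤ ‖(((2^m + l : ℕ)):ℤ_[2]) - ((l:ℕ):ℤ_[2])‖ := hw _ _
          _ = ‖(2:ℤ_[2])^m‖ := by
              congr 1; push_cast; ring
          _ = (2:ℝ)^(-(m:ℤ)) := norm_two_pow m
      exact le_trans (PadicInt.nonarchimedean _ _) (max_le hA hB)


lemma norm_four : ‖(4:ℤ_[2])‖ = (4:ℝ)⁻¹ := by
  rw [show (4:ℤ_[2]) = 2*2 by norm_num, norm_mul, norm_two]
  norm_num

lemma norm_ge_of_inj {t : ℤ_[2] → ℤ_[2]} (ht : Lip t)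
    (hinj : ∀ k, Function.Injective (indMap t k)) (x y : ℤ_[2]) :
    ‖x - y‖ ≤ ‖t x - t y‖ := by
  by_cases hxy : x = y
  · simp [hxy]
  by_cases htxy : t x = t y
  · exfalso
    apply hxy
    rw [← PadicInt.ext_of_toZModPow]
    intro n
    apply hinj n
    rw [← indMap_spec ht, ← indMap_spec ht, htxy]
  · have hsub : t x - t y ≠ 0 := sub_ne_zero.mpr htxy
    have hj0 : 0 ≤ (t x - t y).valuation := Nat.zero_le _
    have hnorm : ‖t x - t y‖ = (2:ℝ)^(-((t x - t y).valuation : ℤ)) := by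
      have := PadicInt.norm_eq_zpow_neg_valuation (p := 2) hsub
      rwa [Nat.cast_ofNat] at this
    have hle : ‖t x - t y‖ ≤ (2:ℝ)^(-(((t x - t y).valuation : ℕ):ℤ)) := by
      rw [hnorm]
    have h1 : toZModPow ((t x - t y).valuation) (t x) =
        toZModPow ((t x - t y).valuation) (t y) := (toZ_eq_iff _ _ _).mpr hle
    have h2 : toZModPow ((t x - t y).valuation) x =
        toZModPow ((t x - t y).valuation) y := by
      apply hinj _
      rw [← indMap_spec ht, ← indMap_spec ht, h1]
    have h3 := (toZ_eq_iff _ _ _).mp h2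
    rw [hnorm]
    exact h3

lemma inj_add {t w : ℤ_[2] → ℤ_[2]} (ht : Lip t) (hw : Lip w)
    (hinj : ∀ k, Function.Injective (indMap t k)) (n : ℕ) :
    Function.Injective (indMap (fun x => t x + 4 * w x) n) := by
  intro a b hab
  by_contra hne
  set g : ℤ_[2] → ℤ_[2] := fun x => t x + 4 * w x with hgdef
  set x : ℤ_[2] := ((a.val : ℕ) : ℤ_[2]) with hx
  set y : ℤ_[2] := ((b.val : ℕ) : ℤ_[2]) with hy
  have hgxy : ‖g x - g y‖ ≤ (2:ℝ)^(-(n:ℤ)) := by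
    rw [← toZ_eq_iff]
    exact hab
  have hxyne : toZModPow n x ≠ toZModPow n y := by
    rw [hx, hy, toZ_val, toZ_val]; exact hne
  have hxy : ¬ (‖x - y‖ ≤ (2:ℝ)^(-(n:ℤ))) := fun h => hxyne ((toZ_eq_iff n x y).mpr h)
  have hx_ne : x ≠ y := by
    intro h
    exact hxy (by rw [h, sub_self, norm_zero]; positivity)
  have h1 : ‖x - y‖ ≤ ‖t x - t y‖ := norm_ge_of_inj ht hinj x y
  have h4w : ‖4 * (w x - w y)‖ < ‖t x - t y‖ := by
    have hpos : 0 < ‖x - y‖ := norm_pos_iff.mpr (sub_ne_zero.mpr hx_ne)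
    calc ‖4 * (w x - w y)‖ = 4⁻¹ * ‖w x - w y‖ := by rw [norm_mul, norm_four]
      _ ≤ 4⁻¹ * ‖x - y‖ := mul_le_mul_of_nonneg_left (hw x y) (by norm_num)
      _ < ‖x - y‖ := by nlinarith
      _ ≤ ‖t x - t y‖ := h1
  have hgd : t x - t y = (g x - g y) + (-(4 * (w x - w y))) := by
    show t x - t y = ((t x + 4*w x) - (t y + 4*w y)) + _
    ring
  have h2 : ‖t x - t y‖ ≤ ‖g x - g y‖ := by
    have hb := PadicInt.nonarchimedean (g x - g y) (-(4 * (w x - w y)))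
    rw [← hgd, norm_neg] at hb
    rcases le_max_iff.mp hb with h | h
    · exact h
    · exact absurd (lt_of_le_of_lt h h4w) (lt_irrefl _)
  exact hxy (le_trans h1 (le_trans h2 hgxy))

lemma lip_add {t w : ℤ_[2] → ℤ_[2]} (ht : Lip t) (hw : Lip w) :
    Lip (fun x => t x + 4 * w x) := by
  intro x y
  have hgd : (t x + 4*w x) - (t y + 4*w y) = (t x - t y) + 4*(w x - w y) := by ring
  show ‖(t x + 4*w x) - (t y + 4*w y)‖ ≤ _
  rw [hgd]
  refine le_trans (PadicInt.nonarchimedean _ _) (max_le (ht x y) ?_)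
  calc ‖4*(w x - w y)‖ = 4⁻¹ * ‖w x - w y‖ := by rw [norm_mul, norm_four]
    _ ≤ 1 * ‖x - y‖ := by
        refine mul_le_mul (by norm_num) (hw x y) (norm_nonneg _) (by norm_num)
    _ = ‖x - y‖ := one_mul _

lemma trans_add {t w : ℤ_[2] → ℤ_[2]} (ht : Lip t) (hw : Lip w)
    (hT : ∀ n, Trans2 t n) : ∀ n, Trans2 (fun x => t x + 4 * w x) n := by
  set g : ℤ_[2] → ℤ_[2] := fun x => t x + 4 * w x with hgdef
  have hLipg : Lip g := lip_add ht hw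
  have hinj_t : ∀ k, Function.Injective (indMap t k) := fun k => (hT k).1.injective
  have hbij_g : ∀ k, Function.Bijective (indMap g k) := fun k =>
    Finite.injective_iff_bijective.mp (inj_add ht hw hinj_t k)
  intro n
  induction n with
  | zero => exact trans_zero g
  | succ n ihn =>
      rw [trans_succ_iff hLipg ihn (hbij_g (n+1))]
      have hiter : ∀ (f : ℤ_[2] → ℤ_[2]), Lip f →
          (indMap f (n+1))^[2^n] 0 = toZModPow (n+1) (f^[2^n] 0) := by
        intro f hf
        rw [indMap_iterate hf, map_zero]
      have hg_orbit := orbit_sum hLipg ihn (hbij_g (n+1)).injective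
      have ht_orbit := orbit_sum ht (hT n) (hinj_t (n+1))
      have hzero : toZModPow (n+1) (4 * ∑ l ∈ Finset.range (2^n), w ((l:ℕ):ℤ_[2])) = 0 := by
        rw [toZ_eq_zero_iff, norm_mul, norm_four]
        calc (4:ℝ)⁻¹ * ‖∑ l ∈ Finset.range (2^n), w ((l:ℕ):ℤ_[2])‖
            ≤ 4⁻¹ * (2:ℝ)^(1-(n:ℤ)) :=
              mul_le_mul_of_nonneg_left (lip_sum_bound hw n) (by norm_num)
          _ = (2:ℝ)^(-((n+1:ℕ):ℤ)) := by
              rw [show (4:ℝ)⁻¹ = (2:ℝ)^(-2:ℤ) by norm_num,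
                ← zpow_add₀ (by norm_num : (2:ℝ) ≠ 0)]
              congr 1
              push_cast
              ring
      have hsum_eq : (∑ l ∈ Finset.range (2^n), toZModPow (n+1) (g ((l:ℕ):ℤ_[2]) - ((l:ℕ):ℤ_[2])))
          = ∑ l ∈ Finset.range (2^n), toZModPow (n+1) (t ((l:ℕ):ℤ_[2]) - ((l:ℕ):ℤ_[2])) := by
        rw [← map_sum, ← map_sum]
        have hdiff : (∑ l ∈ Finset.range (2^n), (g ((l:ℕ):ℤ_[2]) - ((l:ℕ):ℤ_[2])))
            = (∑ l ∈ Finset.range (2^n), (t ((l:ℕ):ℤ_[2]) - ((l:ℕ):ℤ_[2])))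
              + 4 * ∑ l ∈ Finset.range (2^n), w ((l:ℕ):ℤ_[2]) := by
          rw [Finset.mul_sum, ← Finset.sum_add_distrib]
          refine Finset.sum_congr rfl fun l _ => ?_
          show (t _ + 4 * w _) - _ = _
          ring
        rw [hdiff, map_add, hzero, add_zero]
      have hkey : (indMap g (n+1))^[2^n] 0 = (indMap t (n+1))^[2^n] 0 := by
        rw [hiter g hLipg, hiter t ht, hg_orbit, ht_orbit, hsum_eq]
      rw [hkey]
      exact (trans_succ_iff ht (hT n) (hT (n+1)).1).mp (hT (n+1))


/-! ### Measure-theoretic part -/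

def Ball (n : ℕ) (a : ZMod (2^n)) : Set ℤ_[2] := {x | toZModPow n x = a}

lemma ball_eq_closedBall (n : ℕ) (a : ZMod (2^n)) :
    Ball n a = Metric.closedBall ((a.val : ℤ_[2])) ((2:ℝ)^(-(n:ℤ))) := by
  ext x
  simp only [Ball, Set.mem_setOf_eq, Metric.mem_closedBall, dist_eq_norm]
  have h := toZ_eq_iff n x ((a.val : ℤ_[2]))
  rw [toZ_val] at h
  exact h

lemma ball_measurable (n : ℕ) (a : ZMod (2^n)) : MeasurableSet (Ball n a) := by
  rw [ball_eq_closedBall]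
  exact measurableSet_closedBall

lemma ball_isOpen (n : ℕ) (a : ZMod (2^n)) : IsOpen (Ball n a) := by
  have h : Ball n a = Metric.ball ((a.val : ℤ_[2])) ((2:ℝ)^(-(n:ℤ) + 1)) := by
    rw [ball_eq_closedBall]
    ext x
    simp only [Metric.mem_closedBall, Metric.mem_ball, dist_eq_norm]
    have := PadicInt.norm_le_pow_iff_norm_lt_pow_add_one (x - (a.val : ℤ_[2])) (-(n:ℤ)) (p := 2)
    rw [Nat.cast_ofNat] at this
    exact this
  rw [h]
  exact Metric.isOpen_ball

lemma ball_disj {n : ℕ} {a b : ZMod (2^n)} (hab : a ≠ b) :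
    Disjoint (Ball n a) (Ball n b) := by
  rw [Set.disjoint_left]
  intro x hxa hxb
  exact hab (hxa.symm.trans hxb)

lemma mem_ball_self (n : ℕ) (x : ℤ_[2]) : x ∈ Ball n (toZModPow n x) := rfl

def Balls : Set (Set ℤ_[2]) := {S | ∃ n, ∃ a : ZMod (2^n), S = Ball n a}

lemma isBasis : TopologicalSpace.IsTopologicalBasis Balls := by
  refine TopologicalSpace.isTopologicalBasis_of_isOpen_of_nhds ?_ ?_
  · rintro S ⟨n, a, rfl⟩
    exact ball_isOpen n a
  · intro x U hxU hU
    rcases Metric.isOpen_iff.mp hU x hxU with ⟨ε, hε, hsub⟩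
    obtain ⟨n, hn⟩ : ∃ n : ℕ, (2:ℝ)^(-(n:ℤ)) < ε := by
      obtain ⟨n, hn⟩ := exists_pow_lt_of_lt_one hε (by norm_num : (1/2 : ℝ) < 1)
      refine ⟨n, ?_⟩
      calc (2:ℝ)^(-(n:ℤ)) = ((2:ℝ)⁻¹)^n := by
            rw [zpow_neg, ← zpow_natCast, inv_zpow]
        _ = (1/2:ℝ)^n := by norm_num
        _ < ε := hn
    refine ⟨Ball n (toZModPow n x), ⟨n, _, rfl⟩, mem_ball_self n x, ?_⟩
    intro y hy
    apply hsub
    rw [Metric.mem_ball, dist_eq_norm]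
    exact lt_of_le_of_lt ((toZ_eq_iff _ _ _).mp hy) hn

lemma gen_eq : (inferInstance : MeasurableSpace ℤ_[2]) = .generateFrom Balls := by
  rw [BorelSpace.measurable_eq (α := ℤ_[2])]
  exact isBasis.borel_eq_generateFrom

lemma isPi : IsPiSystem Balls := by
  rintro S ⟨n, a, rfl⟩ T ⟨m, b, rfl⟩ hne
  obtain ⟨x, hxa, hxb⟩ := hne
  rcases le_total n m with h | h
  · have hsub : Ball m b ⊆ Ball n a := by
      intro y hy
      have h1 : ‖y - x‖ ≤ (2:ℝ)^(-(m:ℤ)) := by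
        rw [← toZ_eq_iff]
        exact hy.trans hxb.symm
      have h2 : ‖y - x‖ ≤ (2:ℝ)^(-(n:ℤ)) :=
        h1.trans (zpow_le_zpow_right₀ (by norm_num) (by omega))
      have h3 : toZModPow n y = toZModPow n x := (toZ_eq_iff _ _ _).mpr h2
      exact (h3.trans hxa : _)
    rw [Set.inter_eq_right.mpr hsub]
    exact ⟨m, b, rfl⟩
  · have hsub : Ball n a ⊆ Ball m b := by
      intro y hy
      have h1 : ‖y - x‖ ≤ (2:ℝ)^(-(n:ℤ)) := by
        rw [← toZ_eq_iff]
        exact hy.trans hxa.symm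
      have h2 : ‖y - x‖ ≤ (2:ℝ)^(-(m:ℤ)) :=
        h1.trans (zpow_le_zpow_right₀ (by norm_num) (by omega))
      have h3 : toZModPow m y = toZModPow m x := (toZ_eq_iff _ _ _).mpr h2
      exact (h3.trans hxb : _)
    rw [Set.inter_eq_left.mpr hsub]
    exact ⟨n, a, rfl⟩

section MeasurePart

variable {μ : Measure ℤ_[2]}

lemma meas_ball_eq (hμ : μ.IsAddHaarMeasure) (n : ℕ) (a b : ZMod (2^n)) :
    μ (Ball n a) = μ (Ball n b) := by
  have : Ball n a = (fun x => (((b.val : ℤ_[2])) - ((a.val : ℤ_[2]))) + x)⁻¹' (Ball n b) := by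
    ext x
    simp only [Ball, Set.mem_setOf_eq, Set.mem_preimage]
    rw [map_add, map_sub, toZ_val, toZ_val]
    constructor
    · intro h
      rw [h]
      ring
    · intro h
      have h2 : (b - a) + toZModPow n x = (b - a) + a := by rw [h]; ring
      exact add_left_cancel h2
  rw [this, measure_preimage_add]

end MeasurePart

section MeasurePart2

variable {μ : Measure ℤ_[2]}

lemma meas_ball (hμ : μ.IsAddHaarMeasure) (hμ1 : IsProbabilityMeasure μ)
    (n : ℕ) (a : ZMod (2^n)) : μ (Ball n a) = ((2^n : ℕ) : ℝ≥0∞)⁻¹ := by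
  classical
  have hcover : (⋃ b ∈ (Finset.univ : Finset (ZMod (2^n))), Ball n b) = Set.univ := by
    ext x
    simp only [Set.mem_iUnion, Set.mem_univ, iff_true]
    exact ⟨toZModPow n x, Finset.mem_univ _, rfl⟩
  have hdisj : (↑(Finset.univ : Finset (ZMod (2^n))) : Set (ZMod (2^n))).PairwiseDisjoint
      (Ball n) := fun b _ c _ hbc => ball_disj hbc
  have hsum : ∑ b ∈ (Finset.univ : Finset (ZMod (2^n))), μ (Ball n b) = 1 := by
    rw [← measure_biUnion_finset hdisj (fun b _ => ball_measurable n b), hcover, measure_univ]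
  have hconst : ∀ b ∈ (Finset.univ : Finset (ZMod (2^n))), μ (Ball n b) = μ (Ball n a) :=
    fun b _ => meas_ball_eq hμ n b a
  rw [Finset.sum_congr rfl hconst, Finset.sum_const, Finset.card_univ, ZMod.card] at hsum
  have h2 : ((2^n : ℕ) : ℝ≥0∞) ≠ 0 := by
    exact_mod_cast (Nat.two_pow_pos n).ne'
  have h2t : ((2^n : ℕ) : ℝ≥0∞) ≠ ⊤ := ENNReal.natCast_ne_top _
  have hmul : ((2^n : ℕ) : ℝ≥0∞) * μ (Ball n a) = 1 := by
    rw [← nsmul_eq_mul]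
    exact hsum
  calc μ (Ball n a) = (((2^n : ℕ) : ℝ≥0∞)⁻¹ * ((2^n : ℕ) : ℝ≥0∞)) * μ (Ball n a) := by
        rw [ENNReal.inv_mul_cancel h2 h2t, one_mul]
    _ = ((2^n : ℕ) : ℝ≥0∞)⁻¹ * (((2^n : ℕ) : ℝ≥0∞) * μ (Ball n a)) := by ring
    _ = ((2^n : ℕ) : ℝ≥0∞)⁻¹ := by rw [hmul, mul_one]

lemma preimage_ball {f : ℤ_[2] → ℤ_[2]} (hf : Lip f) {n : ℕ}
    (hbij : Function.Bijective (indMap f n)) (a : ZMod (2^n)) :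
    f⁻¹' (Ball n a) = Ball n ((Equiv.ofBijective _ hbij).symm a) := by
  ext x
  simp only [Ball, Set.mem_preimage, Set.mem_setOf_eq]
  rw [indMap_spec hf]
  exact (Equiv.ofBijective _ hbij).apply_eq_iff_eq_symm_apply

lemma lip_cont {f : ℤ_[2] → ℤ_[2]} (hf : Lip f) : Continuous f := by
  refine LipschitzWith.continuous (K := 1) ?_
  refine LipschitzWith.of_dist_le_mul ?_
  intro x y
  rw [NNReal.coe_one, one_mul, dist_eq_norm, dist_eq_norm]
  exact hf x y

lemma mp_of_bij {f : ℤ_[2] → ℤ_[2]} (hf : Lip f)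
    (hbij : ∀ n, Function.Bijective (indMap f n))
    (hμ : μ.IsAddHaarMeasure) (hμ1 : IsProbabilityMeasure μ) :
    MeasurePreserving f μ μ := by
  have hmeas : Measurable f := (lip_cont hf).measurable
  refine ⟨hmeas, ?_⟩
  haveI := Measure.isProbabilityMeasure_map (μ := μ) hmeas.aemeasurable
  refine ext_of_generate_finite Balls gen_eq isPi ?_ (by simp)
  rintro S ⟨n, a, rfl⟩
  rw [Measure.map_apply hmeas (ball_measurable n a), preimage_ball hf (hbij n),
    meas_ball hμ hμ1, meas_ball hμ hμ1]

lemma symm_iterate {α : Type*} (σ : Equiv α α) (k : ℕ) (x : α) :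
    (⇑σ.symm)^[k] ((⇑σ)^[k] x) = x := by
  induction k generalizing x with
  | zero => rfl
  | succ k ih =>
      rw [Function.iterate_succ_apply, Function.iterate_succ_apply',
        Equiv.symm_apply_apply]
      exact ih x

lemma ergodic_of_trans {f : ℤ_[2] → ℤ_[2]} (hf : Lip f)
    (hμ : μ.IsAddHaarMeasure) (hμ1 : IsProbabilityMeasure μ)
    (hT : ∀ n, Trans2 f n) : Ergodic f μ := by
  classical
  have hmp := mp_of_bij hf (fun n => (hT n).1) hμ hμ1
  refine ⟨hmp, ?_⟩
  refine ⟨fun s hs hinv => ?_⟩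
  rw [Filter.eventuallyConst_set']
  have hkey : ∀ n (a : ZMod (2^n)), μ (s ∩ Ball n a) = μ s * ((2^n:ℕ):ℝ≥0∞)⁻¹ := by
    intro n a
    set σ := Equiv.ofBijective _ (hT n).1 with hσ
    have hstep : ∀ b : ZMod (2^n), μ (s ∩ Ball n b) = μ (s ∩ Ball n (σ.symm b)) := by
      intro b
      have h1 : f⁻¹' (s ∩ Ball n b) = s ∩ Ball n (σ.symm b) := by
        rw [Set.preimage_inter, hinv, preimage_ball hf (hT n).1]
      calc μ (s ∩ Ball n b) = μ (f⁻¹' (s ∩ Ball n b)) :=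
            (hmp.measure_preimage ((hs.inter (ball_measurable n b))).nullMeasurableSet).symm
        _ = μ (s ∩ Ball n (σ.symm b)) := by rw [h1]
    have hiter : ∀ k (b : ZMod (2^n)), μ (s ∩ Ball n b) = μ (s ∩ Ball n ((⇑σ.symm)^[k] b)) := by
      intro k
      induction k with
      | zero => intro b; rfl
      | succ k ih =>
          intro b
          rw [hstep b, ih (σ.symm b), Function.iterate_succ_apply]
    have hconst : ∀ b : ZMod (2^n), μ (s ∩ Ball n b) = μ (s ∩ Ball n a) := by
      intro b
      obtain ⟨k, hk⟩ := (hT n).pair a b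
      have hsymm : (⇑σ.symm)^[k] b = a := by
        rw [← hk]
        exact symm_iterate σ k a
      rw [hiter k b, hsymm]
    have hcover : (⋃ b ∈ (Finset.univ : Finset (ZMod (2^n))), (s ∩ Ball n b)) = s := by
      ext x
      simp only [Set.mem_iUnion, Set.mem_inter_iff]
      constructor
      · rintro ⟨b, _, hx, _⟩; exact hx
      · intro hx; exact ⟨toZModPow n x, Finset.mem_univ _, hx, rfl⟩
    have hdisj : (↑(Finset.univ : Finset (ZMod (2^n))) : Set (ZMod (2^n))).PairwiseDisjoint
        (fun b => s ∩ Ball n b) := fun b _ c _ hbc =>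
      Disjoint.mono Set.inter_subset_right Set.inter_subset_right (ball_disj hbc)
    have hsum : ∑ b ∈ (Finset.univ : Finset (ZMod (2^n))), μ (s ∩ Ball n b) = μ s := by
      rw [← measure_biUnion_finset hdisj (fun b _ => hs.inter (ball_measurable n b)), hcover]
    rw [Finset.sum_congr rfl (fun b _ => hconst b), Finset.sum_const, Finset.card_univ,
      ZMod.card] at hsum
    have h2 : ((2^n : ℕ) : ℝ≥0∞) ≠ 0 := by exact_mod_cast (Nat.two_pow_pos n).ne'
    have h2t : ((2^n : ℕ) : ℝ≥0∞) ≠ ⊤ := ENNReal.natCast_ne_top _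
    have hmul : ((2^n : ℕ) : ℝ≥0∞) * μ (s ∩ Ball n a) = μ s := by
      rw [← nsmul_eq_mul]; exact hsum
    calc μ (s ∩ Ball n a)
        = (((2^n : ℕ) : ℝ≥0∞)⁻¹ * ((2^n : ℕ) : ℝ≥0∞)) * μ (s ∩ Ball n a) := by
          rw [ENNReal.inv_mul_cancel h2 h2t, one_mul]
      _ = ((2^n : ℕ) : ℝ≥0∞)⁻¹ * (((2^n : ℕ) : ℝ≥0∞) * μ (s ∩ Ball n a)) := by ring
      _ = μ s * ((2^n:ℕ):ℝ≥0∞)⁻¹ := by rw [hmul]; ring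
  have hrest : μ.restrict s = (μ s) • μ := by
    haveI : IsFiniteMeasure ((μ s) • μ) := by
      refine ⟨?_⟩
      rw [Measure.smul_apply, smul_eq_mul, measure_univ, mul_one]
      exact measure_lt_top μ s
    refine ext_of_generate_finite Balls gen_eq isPi ?_ ?_
    · rintro S ⟨n, a, rfl⟩
      rw [Measure.restrict_apply (ball_measurable n a), Set.inter_comm, hkey n a,
        Measure.smul_apply, smul_eq_mul, meas_ball hμ hμ1]
    · rw [Measure.restrict_apply_univ, Measure.smul_apply, smul_eq_mul, measure_univ, mul_one]
  have hvals := congrArg (fun ν : Measure ℤ_[2] => ν sᶜ) hrest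
  simp only [Measure.restrict_apply hs.compl, Set.compl_inter_self, measure_empty,
    Measure.smul_apply, smul_eq_mul] at hvals
  rcases mul_eq_zero.mp hvals.symm with h | h
  · left
    exact ae_eq_empty.mpr h
  · right
    exact ae_eq_univ.mpr h

end MeasurePart2

section MeasurePart3

variable {μ : Measure ℤ_[2]}

lemma trans_of_ergodic {f : ℤ_[2] → ℤ_[2]} (hf : Lip f)
    (hμ : μ.IsAddHaarMeasure) (hμ1 : IsProbabilityMeasure μ)
    (hE : Ergodic f μ) (n : ℕ) : Trans2 f n := by
  classical
  have hmp := hE.toMeasurePreserving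
  have h2 : ((2^n : ℕ) : ℝ≥0∞) ≠ 0 := by exact_mod_cast (Nat.two_pow_pos n).ne'
  have h2t : ((2^n : ℕ) : ℝ≥0∞) ≠ ⊤ := ENNReal.natCast_ne_top _
  have hv0 : (((2^n : ℕ) : ℝ≥0∞))⁻¹ ≠ 0 := ENNReal.inv_ne_zero.mpr h2t
  have hvt : (((2^n : ℕ) : ℝ≥0∞))⁻¹ ≠ ⊤ := ENNReal.inv_ne_top.mpr h2
  have hinj : Function.Injective (indMap f n) := by
    intro a b hab
    by_contra hne
    have hsub : Ball n a ∪ Ball n b ⊆ f⁻¹' (Ball n (indMap f n a)) := by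
      rintro x (hx | hx)
      · show toZModPow n (f x) = _
        rw [indMap_spec hf]
        rw [show toZModPow n x = a from hx]
      · show toZModPow n (f x) = _
        rw [indMap_spec hf]
        rw [show toZModPow n x = b from hx, hab]
    have h1 : μ (Ball n a ∪ Ball n b) = ((2^n:ℕ):ℝ≥0∞)⁻¹ + ((2^n:ℕ):ℝ≥0∞)⁻¹ := by
      rw [measure_union (ball_disj hne) (ball_measurable n b), meas_ball hμ hμ1,
        meas_ball hμ hμ1]
    have h2' : μ (f⁻¹' (Ball n (indMap f n a))) = ((2^n:ℕ):ℝ≥0∞)⁻¹ := by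
      rw [hmp.measure_preimage (ball_measurable n _).nullMeasurableSet, meas_ball hμ hμ1]
    have h3 := measure_mono (μ := μ) hsub
    rw [h1, h2'] at h3
    exact absurd h3 (not_le.mpr (ENNReal.lt_add_right hvt hv0))
  have hbij : Function.Bijective (indMap f n) := Finite.injective_iff_bijective.mp hinj
  refine ⟨hbij, ?_⟩
  set F := indMap f n with hF
  set O : Set (ZMod (2^n)) := {b | ∃ k, F^[k] 0 = b} with hO
  have hOfwd : F '' O ⊆ O := by
    rintro _ ⟨b, ⟨k, hk⟩, rfl⟩
    exact ⟨k+1, by rw [Function.iterate_succ_apply', hk]⟩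
  have hOF : F '' O = O :=
    Set.eq_of_subset_of_ncard_le hOfwd
      (le_of_eq (Set.ncard_image_of_injective O hinj).symm) (Set.toFinite O)
  have hpre : F⁻¹' O = O := by
    conv_lhs => rw [← hOF]
    exact Set.preimage_image_eq O hinj
  set U : Set ℤ_[2] := {x | toZModPow n x ∈ O} with hU
  have hUball : U = ⋃ b ∈ O.toFinset, Ball n b := by
    ext x
    simp only [hU, Set.mem_setOf_eq, Set.mem_iUnion, Set.mem_toFinset]
    constructor
    · intro h; exact ⟨toZModPow n x, h, rfl⟩
    · rintro ⟨b, hb, hx⟩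
      rw [show toZModPow n x = b from hx]
      exact hb
  have hUmeas : MeasurableSet U := by
    rw [hUball]
    exact O.toFinset.measurableSet_biUnion (fun b _ => ball_measurable n b)
  have hUinv : f⁻¹' U = U := by
    ext x
    simp only [hU, Set.mem_preimage, Set.mem_setOf_eq]
    rw [indMap_spec hf]
    constructor
    · intro h
      have : toZModPow n x ∈ F⁻¹' O := h
      rwa [hpre] at this
    · intro h
      have : toZModPow n x ∈ F⁻¹' O := by rwa [hpre]
      exact this
  have hdisj : (↑O.toFinset : Set (ZMod (2^n))).PairwiseDisjoint (Ball n) :=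
    fun b _ c _ hbc => ball_disj hbc
  have hmeasU : μ U = (O.toFinset.card : ℝ≥0∞) * ((2^n:ℕ):ℝ≥0∞)⁻¹ := by
    rw [hUball, measure_biUnion_finset hdisj (fun b _ => ball_measurable n b)]
    rw [Finset.sum_congr rfl (fun b _ => meas_ball hμ hμ1 n b), Finset.sum_const, nsmul_eq_mul]
  have hzero_one := hE.toPreErgodic.prob_eq_zero_or_one hUmeas hUinv
  have h0O : (0 : ZMod (2^n)) ∈ O := ⟨0, rfl⟩
  have hUne : μ U ≠ 0 := by
    intro h
    have hsub0 : Ball n 0 ⊆ U := by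
      intro x hx
      show toZModPow n x ∈ O
      rw [show toZModPow n x = 0 from hx]
      exact h0O
    have := measure_mono (μ := μ) hsub0
    rw [h, meas_ball hμ hμ1] at this
    exact hv0 (le_antisymm this zero_le)
  have hU1 : μ U = 1 := by
    rcases hzero_one with h | h
    · exact absurd h hUne
    · exact h
  have hcard : O.toFinset.card = 2^n := by
    have heq : (O.toFinset.card : ℝ≥0∞) * ((2^n:ℕ):ℝ≥0∞)⁻¹
        = ((2^n : ℕ) : ℝ≥0∞) * ((2^n:ℕ):ℝ≥0∞)⁻¹ := by
      rw [← hmeasU, hU1, ENNReal.mul_inv_cancel h2 h2t]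
    have := (ENNReal.mul_left_inj hv0 hvt).mp heq
    exact_mod_cast this
  have hOuniv : O.toFinset = Finset.univ := by
    apply Finset.eq_univ_of_card
    rw [hcard, card_zmod]
  intro a
  have : a ∈ O.toFinset := by rw [hOuniv]; exact Finset.mem_univ a
  rwa [Set.mem_toFinset] at this

end MeasurePart3

lemma ergodic_iff_trans {f : ℤ_[2] → ℤ_[2]} (hf : Lip f) {μ : Measure ℤ_[2]}
    (hμ : μ.IsAddHaarMeasure) (hμ1 : IsProbabilityMeasure μ) :
    Ergodic f μ ↔ ∀ n, Trans2 f n :=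
  ⟨fun hE n => trans_of_ergodic hf hμ hμ1 hE n, fun hT => ergodic_of_trans hf hμ hμ1 hT⟩

end Erg4

theorem ergodic_add_four_mul_iff
    (μ : Measure ℤ_[2]) (hμ : μ.IsAddHaarMeasure) (hμ1 : IsProbabilityMeasure μ)
    (t w : ℤ_[2] → ℤ_[2])
    (ht : ∀ x y : ℤ_[2], ‖t x - t y‖ ≤ ‖x - y‖)
    (hw : ∀ x y : ℤ_[2], ‖w x - w y‖ ≤ ‖x - y‖) :
    Ergodic (fun x => t x + 4 * w x) μ ↔ Ergodic t μ := by
  have ht' : Erg4.Lip t := ht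
  have hw' : Erg4.Lip w := hw
  have hnw' : Erg4.Lip (fun x => - w x) := by
    intro x y
    have : (fun x => - w x) x - (fun x => -w x) y = -(w x - w y) := by ring
    rw [this, norm_neg]
    exact hw x y
  have hg' : Erg4.Lip (fun x => t x + 4 * w x) := Erg4.lip_add ht' hw'
  rw [Erg4.ergodic_iff_trans hg' hμ hμ1, Erg4.ergodic_iff_trans ht' hμ hμ1]
  constructor
  · intro hT
    have hback : (fun x => (t x + 4 * w x) + 4 * (- w x)) = t := by
      funext x; ring
    have := Erg4.trans_add hg' hnw' hT
    rwa [show (fun x => (fun x => t x + 4 * w x) x + 4 * ((fun x => -w x) x)) = t by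
      funext x
      show t x + 4 * w x + 4 * (- w x) = t x
      ring] at this
  · intro hT
    exact Erg4.trans_add ht' hw' hT
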